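/- There exists a constant C depending only on h such that for all integers m ≥ 1, ℓ ≥ 0 and 0 ≤ k ≤ 2^ℓ − 1 with 2^ℓ ≤ m, |h_{ℓk}|_{var,m} ≤ C·m^{1/2}. -/

import Mathlib

open MeasureTheory Real

/-- `h_{ℓk}(t) := 2^{ℓ/2} h(2^ℓ t − k)`. -/
noncomputable def hlk (h : ℝ → ℝ) (ℓ k : ℕ) (t : ℝ) : ℝ :=
  (2 : ℝ) ^ ((ℓ : ℝ) / 2) * h ((2 : ℝ) ^ ℓ * t - (k : ℝ))

/-- `h` admits the piecewise Lipschitz derivative `h'` (relative to a finite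
partition of `[0,1]`, outside of which `h` vanishes). -/
def HasPiecewiseLipschitzDeriv (h h' : ℝ → ℝ) : Prop :=
  ∃ (N : ℕ) (t : ℕ → ℝ), 0 < N ∧ t 0 = 0 ∧ t N = 1 ∧
    (∀ i < N, t i < t (i + 1)) ∧
    (∀ i < N, ∀ x ∈ Set.Ioo (t i) (t (i + 1)), HasDerivAt h (h' x) x) ∧
    (∀ i < N, ∃ K : NNReal, LipschitzOnWith K h' (Set.Ioo (t i) (t (i + 1))))

/-- The modulus-of-variation norm
`|g|_{var,m} := |g(0) + g(1)| + Σ_{i=1}^m sup_{s,t ∈ [(i−1)/m, i/m]} |g(t) − g(s)|`. -/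
noncomputable def varNorm (g : ℝ → ℝ) (m : ℕ) : ℝ :=
  |g 0 + g 1| + ∑ i ∈ Finset.Icc 1 m,
    ⨆ st : Set.Icc (((i : ℝ) - 1) / m) ((i : ℝ) / m)
            × Set.Icc (((i : ℝ) - 1) / m) ((i : ℝ) / m),
      |g (st.2 : ℝ) - g (st.1 : ℝ)|

section Aux

variable {h h' : ℝ → ℝ} {N : ℕ} {τ : ℕ → ℝ}

lemma tau_mono (hlt : ∀ i < N, τ i < τ (i + 1)) :
    ∀ i j, i ≤ j → j ≤ N → τ i ≤ τ j := by
  intro i j hij hjN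
  induction j with
  | zero => simp [Nat.le_zero.mp hij]
  | succ n ih =>
    rcases Nat.lt_or_ge i (n + 1) with hc | hc
    · exact le_trans (ih (Nat.lt_succ_iff.mp hc) (by omega)) (le_of_lt (hlt n (by omega)))
    · have : i = n + 1 := le_antisymm hij hc
      simp [this]

lemma locate (hτ0 : τ 0 = 0) (hτN : τ N = 1) (hlt : ∀ i < N, τ i < τ (i + 1))
    {x : ℝ} (hx0 : 0 ≤ x) (hx1 : x ≤ 1) :
    (∃ j ≤ N, x = τ j) ∨ ∃ j < N, x ∈ Set.Ioo (τ j) (τ (j + 1)) := by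
  classical
  set s := (Finset.range (N + 1)).filter (fun j => τ j ≤ x) with hs
  have h0 : 0 ∈ s := by
    simp only [hs, Finset.mem_filter, Finset.mem_range]
    exact ⟨by omega, by rw [hτ0]; exact hx0⟩
  set j := s.max' ⟨0, h0⟩ with hj
  have hjmem : j ∈ s := s.max'_mem ⟨0, h0⟩
  simp only [hs, Finset.mem_filter, Finset.mem_range] at hjmem
  have hjN : j ≤ N := by omega
  rcases eq_or_lt_of_le hjmem.2 with heq | hlt'
  · exact Or.inl ⟨j, hjN, heq.symm⟩
  · have hjN' : j < N := by
      rcases eq_or_lt_of_le hjN with h1 | h2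
      · exfalso
        have : τ j = 1 := by rw [h1, hτN]
        rw [this] at hlt'; linarith
      · exact h2
    refine Or.inr ⟨j, hjN', hlt', ?_⟩
    by_contra hcon
    push_neg at hcon
    have hmem : j + 1 ∈ s := by
      rw [hs, Finset.mem_filter, Finset.mem_range]
      exact ⟨by omega, hcon⟩
    have := s.le_max' (j + 1) hmem
    omega

lemma exists_lip (hlt : ∀ i < N, τ i < τ (i + 1))
    (hd : ∀ i < N, ∀ x ∈ Set.Ioo (τ i) (τ (i + 1)), HasDerivAt h (h' x) x)
    (hK : ∀ i < N, ∃ K : NNReal, LipschitzOnWith K h' (Set.Ioo (τ i) (τ (i + 1)))) :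
    ∃ Λ : ℝ, 0 ≤ Λ ∧ ∀ j < N, ∀ u ∈ Set.Ioo (τ j) (τ (j + 1)),
      ∀ v ∈ Set.Ioo (τ j) (τ (j + 1)), |h v - h u| ≤ Λ * |v - u| := by
  have key : ∀ j, ∃ B : ℝ, 0 ≤ B ∧ (j < N → ∀ u ∈ Set.Ioo (τ j) (τ (j + 1)),
      ∀ v ∈ Set.Ioo (τ j) (τ (j + 1)), |h v - h u| ≤ B * |v - u|) := by
    intro j
    by_cases hj : j < N
    · obtain ⟨K, hKlip⟩ := hK j hj
      have hτj := hlt j hj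
      set c : ℝ := (τ j + τ (j + 1)) / 2 with hc
      have hcm : c ∈ Set.Ioo (τ j) (τ (j + 1)) := by
        constructor <;> (rw [hc]; linarith)
      set B : ℝ := |h' c| + K * (τ (j + 1) - τ j) with hB
      have hB0 : 0 ≤ B := by
        have : (0:ℝ) ≤ (K:ℝ) := K.coe_nonneg
        have := abs_nonneg (h' c)
        nlinarith
      have hbound : ∀ x ∈ Set.Ioo (τ j) (τ (j + 1)), ‖h' x‖ ≤ B := by
        intro x hx
        have hd2 := hKlip.dist_le_mul x hx c hcm
        rw [Real.dist_eq, Real.dist_eq] at hd2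
        have hdxc : |x - c| ≤ τ (j + 1) - τ j := by
          rw [abs_le]
          obtain ⟨h1, h2⟩ := hx; obtain ⟨h3, h4⟩ := hcm
          constructor <;> linarith
        have hK0 : (0:ℝ) ≤ (K:ℝ) := K.coe_nonneg
        have habs : |h' x| ≤ |h' c| + |h' x - h' c| := by
          have := abs_sub_abs_le_abs_sub (h' x) (h' c)
          linarith
        rw [Real.norm_eq_abs, hB]
        nlinarith [mul_le_mul_of_nonneg_left hdxc hK0]
      refine ⟨B, hB0, fun _ u hu v hv => ?_⟩
      have := Convex.norm_image_sub_le_of_norm_hasDerivWithin_le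
        (fun x hx => (hd j hj x hx).hasDerivWithinAt) hbound (convex_Ioo _ _) hu hv
      simpa [Real.norm_eq_abs] using this
    · exact ⟨0, le_refl 0, fun hcon => absurd hcon hj⟩
  choose B hB0 hBprop using key
  refine ⟨∑ j ∈ Finset.range N, B j, Finset.sum_nonneg (fun j _ => hB0 j), ?_⟩
  intro j hj u hu v hv
  calc |h v - h u| ≤ B j * |v - u| := hBprop j hj u hu v hv
    _ ≤ (∑ j ∈ Finset.range N, B j) * |v - u| :=
        mul_le_mul_of_nonneg_right
          (Finset.single_le_sum (fun i _ => hB0 i) (Finset.mem_range.mpr hj)) (abs_nonneg _)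

lemma exists_bound (hsupp : ∀ t, t ∉ Set.Icc (0:ℝ) 1 → h t = 0)
    (hτ0 : τ 0 = 0) (hτN : τ N = 1) (hlt : ∀ i < N, τ i < τ (i + 1))
    {Λ : ℝ} (hΛ0 : 0 ≤ Λ)
    (hΛ : ∀ j < N, ∀ u ∈ Set.Ioo (τ j) (τ (j + 1)),
      ∀ v ∈ Set.Ioo (τ j) (τ (j + 1)), |h v - h u| ≤ Λ * |v - u|) :
    ∃ M : ℝ, 1 ≤ M ∧ ∀ x, |h x| ≤ M := by
  set M : ℝ := 1 + Λ + (∑ j ∈ Finset.range (N + 1), |h (τ j)|)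
    + ∑ j ∈ Finset.range N, |h ((τ j + τ (j + 1)) / 2)| with hM
  have hs1 : (0:ℝ) ≤ ∑ j ∈ Finset.range (N + 1), |h (τ j)| :=
    Finset.sum_nonneg fun j _ => abs_nonneg _
  have hs2 : (0:ℝ) ≤ ∑ j ∈ Finset.range N, |h ((τ j + τ (j + 1)) / 2)| :=
    Finset.sum_nonneg fun j _ => abs_nonneg _
  refine ⟨M, by rw [hM]; linarith, ?_⟩
  intro x
  by_cases hx : x ∈ Set.Icc (0:ℝ) 1
  · obtain ⟨hx0, hx1⟩ := hx
    rcases locate hτ0 hτN hlt hx0 hx1 with ⟨j, hjN, hxe⟩ | ⟨j, hjN, hxm⟩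
    · have : |h (τ j)| ≤ ∑ j ∈ Finset.range (N + 1), |h (τ j)| :=
        Finset.single_le_sum (f := fun i => |h (τ i)|) (fun i _ => abs_nonneg _)
          (Finset.mem_range.mpr (Nat.lt_succ_of_le hjN))
      rw [hxe, hM]; linarith
    · set c : ℝ := (τ j + τ (j + 1)) / 2 with hc
      have hcm : c ∈ Set.Ioo (τ j) (τ (j + 1)) := by
        have := hlt j hjN
        constructor <;> (rw [hc]; linarith)
      have hest := hΛ j hjN c hcm x hxm
      have hτj0 : 0 ≤ τ j := by rw [← hτ0]; exact tau_mono hlt 0 j (Nat.zero_le j) (le_of_lt hjN)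
      have hτj1 : τ (j + 1) ≤ 1 := by rw [← hτN]; exact tau_mono hlt (j + 1) N hjN (le_refl N)
      have hdist : |x - c| ≤ 1 := by
        rw [abs_le]
        obtain ⟨h1, h2⟩ := hxm; obtain ⟨h3, h4⟩ := hcm
        constructor <;> linarith
      have habs : |h x| ≤ |h c| + |h x - h c| := by
        have := abs_sub_abs_le_abs_sub (h x) (h c); linarith
      have hΛd : Λ * |x - c| ≤ Λ := by nlinarith
      have hcsum : |h c| ≤ ∑ j ∈ Finset.range N, |h ((τ j + τ (j + 1)) / 2)| := by
        rw [hc]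
        exact Finset.single_le_sum (f := fun i => |h ((τ i + τ (i + 1)) / 2)|)
          (fun i _ => abs_nonneg _) (Finset.mem_range.mpr hjN)
      rw [hM]; linarith
  · rw [hsupp x hx, abs_zero, hM]; linarith

lemma good_osc (hsupp : ∀ t, t ∉ Set.Icc (0:ℝ) 1 → h t = 0)
    (hτ0 : τ 0 = 0) (hτN : τ N = 1) (hlt : ∀ i < N, τ i < τ (i + 1))
    {Λ : ℝ} (hΛ0 : 0 ≤ Λ)
    (hΛ : ∀ j < N, ∀ u ∈ Set.Ioo (τ j) (τ (j + 1)),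
      ∀ v ∈ Set.Ioo (τ j) (τ (j + 1)), |h v - h u| ≤ Λ * |v - u|)
    {a b : ℝ} (hab : a ≤ b) (hgood : ∀ j ≤ N, τ j ∉ Set.Icc a b)
    {u v : ℝ} (hu : u ∈ Set.Icc a b) (hv : v ∈ Set.Icc a b) :
    |h v - h u| ≤ Λ * (b - a) := by
  obtain ⟨hu1, hu2⟩ := hu
  obtain ⟨hv1, hv2⟩ := hv
  by_cases htouch : a ≤ 1 ∧ 0 ≤ b
  · obtain ⟨ha1, hb0⟩ := htouch
    have h0n : (0:ℝ) ∉ Set.Icc a b := by rw [← hτ0]; exact hgood 0 (by omega)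
    have h1n : (1:ℝ) ∉ Set.Icc a b := by rw [← hτN]; exact hgood N (le_refl N)
    simp only [Set.mem_Icc, not_and, not_le] at h0n h1n
    have ha0 : 0 < a := by by_contra hcon; push_neg at hcon; linarith [h0n hcon]
    have hb1 : b < 1 := by
      by_contra hcon; push_neg at hcon
      linarith [h1n (by linarith)]
    rcases locate hτ0 hτN hlt (le_of_lt ha0) (by linarith) with ⟨j, hjN, hae⟩ | ⟨j, hjN, ham⟩
    · refine absurd ?_ (hgood j hjN)
      rw [← hae]
      exact ⟨le_refl a, hab⟩
    · obtain ⟨haj, haj1⟩ := ham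
      have hnj1 : τ (j + 1) ∉ Set.Icc a b := hgood (j + 1) (by omega)
      simp only [Set.mem_Icc, not_and, not_le] at hnj1
      have hbj1 : b < τ (j + 1) := hnj1 (by linarith)
      have hum : u ∈ Set.Ioo (τ j) (τ (j + 1)) := ⟨by linarith, by linarith⟩
      have hvm : v ∈ Set.Ioo (τ j) (τ (j + 1)) := ⟨by linarith, by linarith⟩
      calc |h v - h u| ≤ Λ * |v - u| := hΛ j hjN u hum v hvm
        _ ≤ Λ * (b - a) := by
            apply mul_le_mul_of_nonneg_left _ hΛ0
            rw [abs_le]; constructor <;> linarith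
  · have hz : ∀ w, w ∈ Set.Icc a b → h w = 0 := by
      intro w hw
      apply hsupp
      simp only [Set.mem_Icc, not_and, not_le] at htouch ⊢
      obtain ⟨hw1, hw2⟩ := hw
      intro hw0
      rcases le_or_gt a 1 with hc | hc
      · linarith [htouch hc]
      · linarith
    rw [hz v ⟨hv1, hv2⟩, hz u ⟨hu1, hu2⟩, sub_zero, abs_zero]
    nlinarith

end Aux

set_option maxHeartbeats 2000000 in
/-- There is `C` depending only on `h` such that for all `m ≥ 1`, `ℓ ≥ 0` and
`0 ≤ k ≤ 2^ℓ − 1` with `2^ℓ ≤ m`, `|h_{ℓk}|_{var,m} ≤ C √m`. -/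
theorem hlk_varNorm_bound
    (h : ℝ → ℝ) (hsupp : ∀ t, t ∉ Set.Icc (0:ℝ) 1 → h t = 0)
    (h' : ℝ → ℝ) (hderiv : HasPiecewiseLipschitzDeriv h h') :
    ∃ C : ℝ, 0 < C ∧ ∀ m ℓ k : ℕ, 1 ≤ m → k < 2 ^ ℓ → 2 ^ ℓ ≤ m →
      varNorm (hlk h ℓ k) m ≤ C * Real.sqrt m := by
  classical
  obtain ⟨N, τ, hN, hτ0, hτN, hlt, hd, hK⟩ := hderiv
  obtain ⟨Λ, hΛ0, hΛ⟩ := exists_lip hlt hd hK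
  obtain ⟨M, hM1, hM⟩ := exists_bound hsupp hτ0 hτN hlt hΛ0 hΛ
  have hM0 : (0:ℝ) < M := lt_of_lt_of_le one_pos hM1
  have hN0 : (0:ℝ) ≤ (N:ℝ) := Nat.cast_nonneg N
  refine ⟨2*M + 4*M*((N:ℝ)+1) + 4*Λ, by nlinarith, ?_⟩
  intro m ℓ k hm hk hlm
  have hm0 : (0:ℝ) < m := by exact_mod_cast hm
  have hp0 : (0:ℝ) < 2^ℓ := by positivity
  have hlm' : ((2:ℝ)^ℓ) ≤ m := by exact_mod_cast hlm
  set c : ℝ := (2:ℝ) ^ ((ℓ:ℝ)/2) with hcdef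
  have hc0 : 0 < c := Real.rpow_pos_of_pos two_pos _
  have hcsq : c ≤ Real.sqrt m := by
    rw [hcdef, show ((ℓ:ℝ)/2) = (ℓ:ℝ) * (1/2) by ring,
      Real.rpow_mul (by norm_num : (0:ℝ) ≤ 2), Real.rpow_natCast, ← Real.sqrt_eq_rpow]
    exact Real.sqrt_le_sqrt hlm'
  set δ : ℝ := (2:ℝ)^ℓ / m with hδdef
  have hδ0 : 0 < δ := by positivity
  have hδ1 : δ ≤ 1 := by rw [hδdef, div_le_one hm0]; exact hlm'
  set a : ℕ → ℝ := fun i => 2^ℓ * (((i:ℝ)-1)/m) - k with hadef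
  set b : ℕ → ℝ := fun i => 2^ℓ * ((i:ℝ)/m) - k with hbdef
  have hba : ∀ i, b i - a i = δ := by
    intro i; rw [hbdef, hadef, hδdef]; dsimp only; field_simp; ring
  have hab : ∀ i : ℕ, a i ≤ b i := fun i => by have := hba i; linarith
  -- conversion helpers
  have hconv1 : ∀ (r y : ℝ), ((2:ℝ)^ℓ * (r/m) - k ≤ y) ↔ r * 2^ℓ ≤ (y + k) * m := by
    intro r y
    rw [sub_le_iff_le_add, show (2:ℝ)^ℓ * (r/m) = r * 2^ℓ / m from by ring, div_le_iff₀ hm0]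
  have hconv2 : ∀ (r y : ℝ), (y ≤ (2:ℝ)^ℓ * (r/m) - k) ↔ (y + k) * m ≤ r * 2^ℓ := by
    intro r y
    rw [le_sub_iff_add_le, show (2:ℝ)^ℓ * (r/m) = r * 2^ℓ / m from by ring, le_div_iff₀ hm0]
  set bad : ℕ → Prop := fun i => ∃ j ≤ N, τ j ∈ Set.Icc (a i) (b i) with hbaddef
  set touch : ℕ → Prop := fun i => a i ≤ 1 ∧ 0 ≤ b i with htouchdef
  set φ : ℕ → ℝ := fun i => if bad i then 2*M else if touch i then Λ*δ else 0 with hφdef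
  have hΛδ0 : 0 ≤ Λ * δ := mul_nonneg hΛ0 (le_of_lt hδ0)
  have hφ0 : ∀ i, 0 ≤ φ i := by
    intro i; rw [hφdef]; dsimp only
    split_ifs
    · linarith
    · exact hΛδ0
    · exact le_refl 0
  -- supremum bound on each cell
  have hSup : ∀ i : ℕ,
      (⨆ st : Set.Icc (((i:ℝ)-1)/m) ((i:ℝ)/m) × Set.Icc (((i:ℝ)-1)/m) ((i:ℝ)/m),
        |hlk h ℓ k (st.2:ℝ) - hlk h ℓ k (st.1:ℝ)|) ≤ c * φ i := by
    intro i
    apply Real.iSup_le _ (mul_nonneg (le_of_lt hc0) (hφ0 i))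
    rintro ⟨s, t⟩
    have humem : ∀ x : ℝ, x ∈ Set.Icc (((i:ℝ)-1)/m) ((i:ℝ)/m) →
        (2:ℝ)^ℓ * x - k ∈ Set.Icc (a i) (b i) := by
      intro x hx
      obtain ⟨h1, h2⟩ := hx
      constructor
      · rw [hadef]; dsimp only
        have := mul_le_mul_of_nonneg_left h1 (le_of_lt hp0); linarith
      · rw [hbdef]; dsimp only
        have := mul_le_mul_of_nonneg_left h2 (le_of_lt hp0); linarith
    have hsm := humem s s.2
    have htm := humem t t.2
    show |hlk h ℓ k t - hlk h ℓ k s| ≤ c * φ i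
    simp only [hlk]
    rw [← hcdef, ← mul_sub, abs_mul, abs_of_pos hc0]
    apply mul_le_mul_of_nonneg_left _ (le_of_lt hc0)
    rw [hφdef]; dsimp only
    split_ifs with hb ht
    · have h1 := hM ((2:ℝ)^ℓ * (t:ℝ) - k)
      have h2 := hM ((2:ℝ)^ℓ * (s:ℝ) - k)
      have := abs_sub (h ((2:ℝ)^ℓ * (t:ℝ) - k)) (h ((2:ℝ)^ℓ * (s:ℝ) - k))
      linarith
    · have hgood : ∀ j ≤ N, τ j ∉ Set.Icc (a i) (b i) := by
        intro j hj hmem; exact hb ⟨j, hj, hmem⟩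
      have := good_osc hsupp hτ0 hτN hlt hΛ0 hΛ (hab i) hgood hsm htm
      rw [hba i] at this
      exact this
    · rw [htouchdef] at ht; dsimp only at ht; push_neg at ht
      have hz : ∀ w ∈ Set.Icc (a i) (b i), h w = 0 := by
        intro w hw
        apply hsupp
        simp only [Set.mem_Icc, not_and, not_le]
        intro hw0
        rcases le_or_gt (a i) 1 with hc1 | hc1
        · linarith [ht hc1, hw.2]
        · linarith [hw.1]
      rw [hz _ htm, hz _ hsm, sub_zero, abs_zero]
  -- boundary term
  have hbound1 : |hlk h ℓ k 0 + hlk h ℓ k 1| ≤ c * (2*M) := by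
    have h0 : |hlk h ℓ k 0| ≤ c * M := by
      simp only [hlk]
      rw [← hcdef, abs_mul, abs_of_pos hc0]
      exact mul_le_mul_of_nonneg_left (hM _) (le_of_lt hc0)
    have h1 : |hlk h ℓ k 1| ≤ c * M := by
      simp only [hlk]
      rw [← hcdef, abs_mul, abs_of_pos hc0]
      exact mul_le_mul_of_nonneg_left (hM _) (le_of_lt hc0)
    have := abs_add_le (hlk h ℓ k 0) (hlk h ℓ k 1)
    linarith
  -- cardinality of the bad set
  have hbadcard : ((Finset.Icc 1 m).filter bad).card ≤ 2 * (N + 1) := by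
    have hsub : (Finset.Icc 1 m).filter bad ⊆ (Finset.range (N+1)).biUnion
        (fun j => Finset.Icc ⌈(τ j + k) * m / 2^ℓ⌉₊ (⌈(τ j + k) * m / 2^ℓ⌉₊ + 1)) := by
      intro i hi
      rw [Finset.mem_filter] at hi
      have hbi := hi.2
      rw [hbaddef] at hbi
      obtain ⟨j, hjN, hj1, hj2⟩ := hbi
      rw [hadef] at hj1; rw [hbdef] at hj2; dsimp only at hj1 hj2
      rw [hconv1] at hj1
      rw [hconv2] at hj2
      have hx1 : (i:ℝ) - 1 ≤ (τ j + k) * m / 2^ℓ := by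
        rw [le_div_iff₀ hp0]; linarith
      have hx2 : (τ j + k) * m / 2^ℓ ≤ (i:ℝ) := by
        rw [div_le_iff₀ hp0]; linarith
      refine Finset.mem_biUnion.mpr ⟨j, Finset.mem_range.mpr (by omega), Finset.mem_Icc.mpr ⟨?_, ?_⟩⟩
      · exact Nat.ceil_le.mpr hx2
      · have hle := Nat.le_ceil ((τ j + k) * m / 2^ℓ)
        have : (i:ℝ) ≤ (⌈(τ j + k) * m / 2^ℓ⌉₊ : ℝ) + 1 := by linarith
        exact_mod_cast this
    calc ((Finset.Icc 1 m).filter bad).card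
        ≤ _ := Finset.card_le_card hsub
      _ ≤ ∑ j ∈ Finset.range (N+1),
            (Finset.Icc ⌈(τ j + k) * m / 2^ℓ⌉₊ (⌈(τ j + k) * m / 2^ℓ⌉₊ + 1)).card :=
          Finset.card_biUnion_le
      _ ≤ ∑ j ∈ Finset.range (N+1), 2 := by
          apply Finset.sum_le_sum
          intro j _
          rw [Nat.card_Icc]
          omega
      _ = 2 * (N + 1) := by rw [Finset.sum_const, Finset.card_range, smul_eq_mul]; ring
  -- cardinality of touching good cells
  set D : ℕ := ⌈(m:ℝ)/2^ℓ⌉₊ with hDdef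
  have htouchcard : ((Finset.Icc 1 m).filter (fun i => ¬ bad i ∧ touch i)).card ≤ D + 2 := by
    have hsub : (Finset.Icc 1 m).filter (fun i => ¬ bad i ∧ touch i) ⊆
        Finset.Icc ⌈(k:ℝ) * m / 2^ℓ⌉₊ (⌈(k:ℝ) * m / 2^ℓ⌉₊ + D + 1) := by
      intro i hi
      rw [Finset.mem_filter] at hi
      have hti := hi.2.2
      rw [htouchdef] at hti
      obtain ⟨hta, htb⟩ := hti
      rw [hadef] at hta; rw [hbdef] at htb; dsimp only at hta htb
      rw [hconv1] at hta
      rw [hconv2] at htb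
      have hy1 : (k:ℝ) * m / 2^ℓ ≤ (i:ℝ) := by
        rw [div_le_iff₀ hp0]; nlinarith
      have hy2 : (i:ℝ) - 1 ≤ (k:ℝ) * m / 2^ℓ + (m:ℝ) / 2^ℓ := by
        rw [← add_div, le_div_iff₀ hp0]; nlinarith
      rw [Finset.mem_Icc]
      constructor
      · exact Nat.ceil_le.mpr hy1
      · have hle1 := Nat.le_ceil ((k:ℝ) * m / 2^ℓ)
        have hle2 := Nat.le_ceil ((m:ℝ) / 2^ℓ)
        have : (i:ℝ) ≤ (⌈(k:ℝ) * m / 2^ℓ⌉₊ : ℝ) + (D:ℝ) + 1 := by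
          rw [hDdef]; push_cast; linarith
        exact_mod_cast this
    calc ((Finset.Icc 1 m).filter (fun i => ¬ bad i ∧ touch i)).card
        ≤ _ := Finset.card_le_card hsub
      _ ≤ D + 2 := by rw [Nat.card_Icc]; omega
  -- the sum of φ
  have hsum : ∑ i ∈ Finset.Icc 1 m, φ i ≤ 2*M * (2*((N:ℝ)+1)) + Λ * δ * ((D:ℝ) + 2) := by
    have hineq : ∀ i ∈ Finset.Icc 1 m, φ i ≤
        (if bad i then 2*M else 0) + (if ¬ bad i ∧ touch i then Λ*δ else 0) := by
      intro i _
      rw [hφdef]; dsimp only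
      by_cases hb : bad i
      · simp [hb]
      · by_cases ht : touch i
        · simp [hb, ht]
        · simp [hb, ht]
    calc ∑ i ∈ Finset.Icc 1 m, φ i
        ≤ ∑ i ∈ Finset.Icc 1 m, ((if bad i then 2*M else 0)
            + (if ¬ bad i ∧ touch i then Λ*δ else 0)) := Finset.sum_le_sum hineq
      _ = (∑ i ∈ Finset.Icc 1 m, if bad i then 2*M else 0)
            + ∑ i ∈ Finset.Icc 1 m, if ¬ bad i ∧ touch i then Λ*δ else 0 :=
          Finset.sum_add_distrib
      _ = (((Finset.Icc 1 m).filter bad).card : ℝ) * (2*M)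
            + (((Finset.Icc 1 m).filter (fun i => ¬ bad i ∧ touch i)).card : ℝ) * (Λ*δ) := by
          rw [← Finset.sum_filter, ← Finset.sum_filter, Finset.sum_const, Finset.sum_const,
            nsmul_eq_mul, nsmul_eq_mul]
      _ ≤ ((2*(N+1) : ℕ) : ℝ) * (2*M) + (((D + 2 : ℕ)) : ℝ) * (Λ*δ) := by
          apply add_le_add
          · exact mul_le_mul_of_nonneg_right (by exact_mod_cast hbadcard) (by linarith)
          · exact mul_le_mul_of_nonneg_right (by exact_mod_cast htouchcard) hΛδ0
      _ = 2*M * (2*((N:ℝ)+1)) + Λ * δ * ((D:ℝ) + 2) := by push_cast; ring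
  have hδD : δ * ((D:ℝ) + 2) ≤ 4 := by
    have hDlt : (D:ℝ) < (m:ℝ)/2^ℓ + 1 := by
      rw [hDdef]; exact Nat.ceil_lt_add_one (by positivity)
    have hδm : δ * ((m:ℝ)/2^ℓ) = 1 := by rw [hδdef]; field_simp
    nlinarith
  have hsum2 : ∑ i ∈ Finset.Icc 1 m, φ i ≤ 4*M*((N:ℝ)+1) + 4*Λ := by
    have : Λ * δ * ((D:ℝ) + 2) ≤ 4*Λ := by nlinarith
    nlinarith [hsum]
  -- assemble
  unfold varNorm
  calc |hlk h ℓ k 0 + hlk h ℓ k 1| + ∑ i ∈ Finset.Icc 1 m,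
        ⨆ st : Set.Icc (((i:ℝ)-1)/m) ((i:ℝ)/m) × Set.Icc (((i:ℝ)-1)/m) ((i:ℝ)/m),
          |hlk h ℓ k (st.2:ℝ) - hlk h ℓ k (st.1:ℝ)|
      ≤ c * (2*M) + ∑ i ∈ Finset.Icc 1 m, c * φ i :=
        add_le_add hbound1 (Finset.sum_le_sum fun i _ => hSup i)
    _ = c * (2*M + ∑ i ∈ Finset.Icc 1 m, φ i) := by rw [← Finset.mul_sum]; ring
    _ ≤ c * (2*M + (4*M*((N:ℝ)+1) + 4*Λ)) := by
        apply mul_le_mul_of_nonneg_left _ (le_of_lt hc0)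
        linarith
    _ = (2*M + 4*M*((N:ℝ)+1) + 4*Λ) * c := by ring
    _ ≤ (2*M + 4*M*((N:ℝ)+1) + 4*Λ) * Real.sqrt m := by
        apply mul_le_mul_of_nonneg_left hcsq
        nlinarith
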